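/- Let M be a rank-r matroid on a linearly ordered n-element set S, and let w = w_{M(S)} be its distinguished word. Then π(w) is a basis of M, and it is the minimum basis: every basis B of M satisfies B ≥ π(w) in the Gale order on the r-element subsets of S. -/

import Mathlib

open Matroid Set

/-- The rank of a set `X` in a matroid `M`: the largest cardinality of an independent
subset of `X`. -/
noncomputable def matRk {α : Type*} (M : Matroid α) (X : Set α) : ℕ :=
  sSup {k : ℕ | ∃ I : Set α, I ⊆ X ∧ M.Indep I ∧ I.ncard = k}

/-- The set of positions of the ones of a 0-1 word of length `n`. -/
def ones {n : ℕ} (v : Fin n → Bool) : Finset (Fin n) :=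
  Finset.univ.filter (fun i => v i = true)

/-- The Gale order on subsets of a finite linearly ordered set. -/
def galeLE {α : Type*} [LinearOrder α] (A B : Finset α) : Prop :=
  B.card ≤ A.card ∧ ∀ (i : ℕ) (hA : i < A.card) (hB : i < B.card),
    A.orderEmbOfFin rfl ⟨i, hA⟩ ≤ B.orderEmbOfFin rfl ⟨i, hB⟩

/-- The distinguished word `w_{M(S)}` of a matroid `M` on the linearly ordered set
`S = Fin n`: its `i`-th letter is `1` exactly when `ρ({e₁,…,eᵢ}) - ρ({e₁,…,e_{i-1}}) = 1`. -/
noncomputable def distWord {n : ℕ} (M : Matroid (Fin n)) : Fin n → Bool :=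
  fun i => decide (matRk M {j : Fin n | j < i} < matRk M {j : Fin n | j ≤ i})

/-! ### Auxiliary lemmas -/

lemma aux_bddAbove {n : ℕ} (M : Matroid (Fin n)) (X : Set (Fin n)) :
    BddAbove {k : ℕ | ∃ I : Set (Fin n), I ⊆ X ∧ M.Indep I ∧ I.ncard = k} := by
  refine ⟨n, fun k hk => ?_⟩
  obtain ⟨I, -, -, rfl⟩ := hk
  calc I.ncard ≤ (Set.univ : Set (Fin n)).ncard :=
        Set.ncard_le_ncard (Set.subset_univ I) Set.finite_univ
    _ = n := by simp [Set.ncard_univ]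

lemma le_matRk {n : ℕ} {M : Matroid (Fin n)} {X J : Set (Fin n)} (hJ : M.Indep J)
    (hJX : J ⊆ X) : J.ncard ≤ matRk M X :=
  le_csSup (aux_bddAbove M X) ⟨J, hJX, hJ, rfl⟩

lemma matRk_eq_of_basis {n : ℕ} {M : Matroid (Fin n)} (hE : M.E = Set.univ)
    {I X : Set (Fin n)} (hI : M.IsBasis I X) : matRk M X = I.ncard := by
  refine le_antisymm (csSup_le ⟨I.ncard, I, hI.subset, hI.indep, rfl⟩ ?_)
    (le_matRk hI.indep hI.subset)
  rintro k ⟨J, hJX, hJ, rfl⟩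
  have hXE : X ⊆ M.E := by rw [hE]; exact Set.subset_univ X
  obtain ⟨I', hI', hJI'⟩ := hJ.subset_isBasis_of_subset hJX hXE
  have h1 : J.ncard ≤ I'.ncard := Set.ncard_le_ncard hJI' I'.toFinite
  have h2 : I'.ncard = I.ncard := by
    have := hI'.encard_eq_encard hI
    simp [Set.ncard_def, this]
  omega

/-- Counting characterization of the `k`-th smallest element of a finset. -/
lemma orderEmbOfFin_le_iff {α : Type*} [LinearOrder α] (A : Finset α) {k : ℕ}
    (hk : k < A.card) (x : α) :
    A.orderEmbOfFin rfl ⟨k, hk⟩ ≤ x ↔ k + 1 ≤ (A.filter (· ≤ x)).card := by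
  set a := A.orderEmbOfFin (rfl : A.card = A.card) with ha
  constructor
  · intro h
    have hsub : (Finset.Iic (⟨k, hk⟩ : Fin A.card)).image a ⊆ A.filter (· ≤ x) := by
      intro b hb
      simp only [Finset.mem_image, Finset.mem_Iic] at hb
      obtain ⟨j, hj, rfl⟩ := hb
      refine Finset.mem_filter.mpr ⟨A.orderEmbOfFin_mem rfl j, le_trans ?_ h⟩
      exact a.monotone hj
    have hcard : ((Finset.Iic (⟨k, hk⟩ : Fin A.card)).image a).card = k + 1 := by
      rw [Finset.card_image_of_injective _ a.injective, Fin.card_Iic]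
    calc k + 1 = _ := hcard.symm
      _ ≤ _ := Finset.card_le_card hsub
  · intro h
    by_contra hlt
    push_neg at hlt
    have hsub : A.filter (· ≤ x) ⊆ (Finset.Iio (⟨k, hk⟩ : Fin A.card)).image a := by
      intro b hb
      rw [Finset.mem_filter] at hb
      have hbA : (b : α) ∈ Set.range a := by
        rw [ha, Finset.range_orderEmbOfFin]; exact hb.1
      obtain ⟨j, rfl⟩ := hbA
      have : a j < a ⟨k, hk⟩ := lt_of_le_of_lt hb.2 hlt
      refine Finset.mem_image.mpr ⟨j, Finset.mem_Iio.mpr ?_, rfl⟩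
      exact a.strictMono.lt_iff_lt.mp this
    have := Finset.card_le_card hsub
    rw [Finset.card_image_of_injective _ a.injective, Fin.card_Iio] at this
    have h2 : (A.filter (· ≤ x)).card ≤ k := this
    omega

lemma mem_ones_distWord {n : ℕ} (M : Matroid (Fin n)) (i : Fin n) :
    i ∈ ones (distWord M) ↔ matRk M {j : Fin n | j < i} < matRk M {j : Fin n | j ≤ i} := by
  simp [ones, distWord]

/-- The main induction: the ones of the distinguished word restricted to an initial
segment form a basis of that initial segment. -/
lemma basis_filter_distWord {n : ℕ} (M : Matroid (Fin n)) (hE : M.E = Set.univ) :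
    ∀ m : ℕ, M.IsBasis ↑((ones (distWord M)).filter (fun j : Fin n => (j : ℕ) < m))
      {j : Fin n | (j : ℕ) < m} := by
  intro m
  induction m with
  | zero =>
      have h1 : ((ones (distWord M)).filter (fun j : Fin n => (j : ℕ) < 0)) = ∅ := by
        simp
      have h2 : {j : Fin n | (j : ℕ) < 0} = (∅ : Set (Fin n)) := by
        simp
      rw [h1, h2]
      simp [M.empty_indep.isBasis_self]
  | succ m IH =>
      by_cases h : m < n
      · set i : Fin n := ⟨m, h⟩ with hi
        set G' : Finset (Fin n) := (ones (distWord M)).filter (fun j : Fin n => (j : ℕ) < m) with hG'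
        have hset : {j : Fin n | (j : ℕ) < m + 1} = insert i {j : Fin n | (j : ℕ) < m} := by
          ext j
          simp only [Set.mem_setOf_eq, Set.mem_insert_iff, Nat.lt_succ_iff_lt_or_eq]
          constructor
          · rintro (hj | hj)
            · exact Or.inr hj
            · exact Or.inl (Fin.ext hj)
          · rintro (rfl | hj)
            · exact Or.inr rfl
            · exact Or.inl hj
        have hlt_eq : {j : Fin n | j < i} = {j : Fin n | (j : ℕ) < m} := by
          ext j; exact Fin.lt_def
        have hle_eq : {j : Fin n | j ≤ i} = {j : Fin n | (j : ℕ) < m + 1} := by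
          ext j; exact Fin.le_def.trans Nat.lt_succ_iff.symm
        have hiG' : i ∉ (G' : Set (Fin n)) := by
          simp [hG', hi]
        have hrklt : matRk M {j : Fin n | j < i} = G'.card := by
          rw [hlt_eq, matRk_eq_of_basis hE IH, Set.ncard_coe_finset]
        by_cases hcl : i ∈ M.closure {j : Fin n | (j : ℕ) < m}
        · -- rank does not increase, `i ∉ ones`
          have hbasis2 : M.IsBasis ↑G' {j : Fin n | (j : ℕ) < m + 1} := by
            refine IH.indep.isBasis_of_subset_of_subset_closure
              (IH.subset.trans (by rw [hset]; exact Set.subset_insert _ _)) ?_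
            rw [hset]
            rintro x (rfl | hx)
            · rwa [IH.closure_eq_closure]
            · exact IH.subset_closure hx
          have hrkle : matRk M {j : Fin n | j ≤ i} = G'.card := by
            rw [hle_eq, matRk_eq_of_basis hE hbasis2, Set.ncard_coe_finset]
          have hiO : i ∉ ones (distWord M) := by
            rw [mem_ones_distWord, hrklt, hrkle]; omega
          have hfe : (ones (distWord M)).filter (fun j : Fin n => (j : ℕ) < m + 1) = G' := by
            rw [hG']
            ext j
            simp only [Finset.mem_filter, Nat.lt_succ_iff_lt_or_eq]
            constructor
            · rintro ⟨hj, (hjm | hjm)⟩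
              · exact ⟨hj, hjm⟩
              · exact absurd hj (by rwa [show j = i from Fin.ext hjm])
            · rintro ⟨hj, hjm⟩; exact ⟨hj, Or.inl hjm⟩
          rw [hfe]; exact hbasis2
        · -- rank increases, `i ∈ ones`
          have hiE : i ∈ M.E := by rw [hE]; trivial
          have hind : M.Indep (insert i ↑G') := by
            refine (IH.indep.insert_indep_iff_of_notMem hiG').mpr ⟨hiE, ?_⟩
            rw [IH.closure_eq_closure]; exact hcl
          have hbasis2 : M.IsBasis (insert i ↑G') {j : Fin n | (j : ℕ) < m + 1} := by
            rw [hset]; exact IH.insert_isBasis_insert hind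
          have hrkle : matRk M {j : Fin n | j ≤ i} = G'.card + 1 := by
            rw [hle_eq, matRk_eq_of_basis hE hbasis2,
              Set.ncard_insert_of_notMem hiG' (Finset.finite_toSet G'),
              Set.ncard_coe_finset]
          have hiO : i ∈ ones (distWord M) := by
            rw [mem_ones_distWord, hrklt, hrkle]; omega
          have hfe : (ones (distWord M)).filter (fun j : Fin n => (j : ℕ) < m + 1) = insert i G' := by
            rw [hG']
            ext j
            simp only [Finset.mem_filter, Nat.lt_succ_iff_lt_or_eq, Finset.mem_insert]
            constructor
            · rintro ⟨hj, (hjm | hjm)⟩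
              · exact Or.inr ⟨hj, hjm⟩
              · exact Or.inl (Fin.ext hjm)
            · rintro (rfl | ⟨hj, hjm⟩)
              · exact ⟨hiO, Or.inr rfl⟩
              · exact ⟨hj, Or.inl hjm⟩
          rw [hfe, Finset.coe_insert]; exact hbasis2
      · -- m ≥ n : nothing changes
        push_neg at h
        have h1 : (fun j : Fin n => (j : ℕ) < m + 1) = (fun j : Fin n => (j : ℕ) < m) := by
          funext j
          have := j.isLt
          simp only [eq_iff_iff]
          omega
        have h2 : {j : Fin n | (j : ℕ) < m + 1} = {j : Fin n | (j : ℕ) < m} := by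
          ext j
          have := j.isLt
          simp only [Set.mem_setOf_eq]
          omega
        have hfeq : (ones (distWord M)).filter (fun j : Fin n => (j : ℕ) < m + 1)
            = (ones (distWord M)).filter (fun j : Fin n => (j : ℕ) < m) := by
          ext j
          simp only [Finset.mem_filter]
          have := j.isLt
          exact ⟨fun ⟨a, b⟩ => ⟨a, by omega⟩, fun ⟨a, b⟩ => ⟨a, by omega⟩⟩
        rw [hfeq, h2]
        exact IH

lemma base_ones_distWord {n : ℕ} (M : Matroid (Fin n)) (hE : M.E = Set.univ) :
    M.IsBase ↑(ones (distWord M)) := by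
  have h := basis_filter_distWord M hE n
  have h1 : (ones (distWord M)).filter (fun j : Fin n => (j : ℕ) < n) = ones (distWord M) := by
    apply Finset.filter_true_of_mem
    intro j _
    exact j.isLt
  have h2 : {j : Fin n | (j : ℕ) < n} = Set.univ := by
    ext j; simp [j.isLt]
  rw [h1, h2, ← hE, isBasis_ground_iff] at h
  exact h

/-- Let `M` be a rank-`r` matroid on the linearly ordered `n`-element set
`Fin n`, with distinguished word `w = w_{M(S)}`.  Then `π(w)` is a basis of `M`, and it
is the minimum basis: every basis `B` of `M` satisfies `B ≥ π(w)` in the Gale order. -/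
theorem distWord_is_min_basis {n r : ℕ} (M : Matroid (Fin n)) (hE : M.E = Set.univ)
    (hr : ∃ B : Set (Fin n), M.IsBase B ∧ B.ncard = r) :
    M.IsBase ↑(ones (distWord M)) ∧
    ∀ B : Finset (Fin n), M.IsBase ↑B → galeLE (ones (distWord M)) B := by
  have hG := base_ones_distWord M hE
  refine ⟨hG, fun B hB => ?_⟩
  set G : Finset (Fin n) := ones (distWord M) with hGdef
  have hcard : B.card = G.card := by
    have := hB.ncard_eq_ncard_of_isBase hG
    rwa [Set.ncard_coe_finset, Set.ncard_coe_finset] at this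
  refine ⟨hcard.le, fun k hA hBk => ?_⟩
  set x : Fin n := B.orderEmbOfFin rfl ⟨k, hBk⟩ with hx
  -- B has at least k+1 elements ≤ x
  have hBcount : k + 1 ≤ (B.filter (· ≤ x)).card :=
    (orderEmbOfFin_le_iff B hBk x).mp le_rfl
  -- hence the rank of the initial segment {j ≤ x} is at least k+1
  have hindep : M.Indep ↑(B.filter (· ≤ x)) :=
    hB.indep.subset (by simp only [Finset.coe_subset]; exact Finset.filter_subset _ _)
  have hsub : ↑(B.filter (· ≤ x)) ⊆ {j : Fin n | j ≤ x} := by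
    intro j hj
    simp only [Finset.coe_filter, Set.mem_setOf_eq] at hj
    exact hj.2
  have hrk : k + 1 ≤ matRk M {j : Fin n | j ≤ x} := by
    calc k + 1 ≤ (B.filter (· ≤ x)).card := hBcount
      _ = (↑(B.filter (· ≤ x)) : Set (Fin n)).ncard := (Set.ncard_coe_finset _).symm
      _ ≤ _ := le_matRk hindep hsub
  -- the rank of {j ≤ x} equals the number of elements of G that are ≤ x
  have hbasisx := basis_filter_distWord M hE ((x : ℕ) + 1)
  have hfe : G.filter (fun j : Fin n => (j : ℕ) < (x : ℕ) + 1) = G.filter (· ≤ x) := by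
    apply Finset.filter_congr
    intro j _
    exact Nat.lt_succ_iff.trans Fin.le_def.symm
  have hse : {j : Fin n | (j : ℕ) < (x : ℕ) + 1} = {j : Fin n | j ≤ x} := by
    ext j
    simp only [Set.mem_setOf_eq]
    exact Nat.lt_succ_iff.trans Fin.le_def.symm
  rw [hfe, hse] at hbasisx
  have hrkeq : matRk M {j : Fin n | j ≤ x} = (G.filter (· ≤ x)).card := by
    rw [matRk_eq_of_basis hE hbasisx, Set.ncard_coe_finset]
  have hGcount : k + 1 ≤ (G.filter (· ≤ x)).card := by omega
  exact (orderEmbOfFin_le_iff G hA x).mpr hGcount
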